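/- For odd positive integers j and 0 ≤ τ < 1, the integral I_j := ∫_0^∞ y^j erfc(√(2/(1−τ)) y) e^{y²} dy satisfies the recursion I_j = −((j−1)/2) I_{j−2} + (1/(2√π)) √(2/(1−τ)) ((1−τ)/(1+τ))^{j/2} Γ(j/2) − (1/2) δ_{j,1}. -/

import Mathlib

open MeasureTheory Set Real Filter

/-- The complementary error function `erfc(x) = (2/√π) ∫_x^∞ e^{-t²} dt`. -/
noncomputable def erfc (x : ℝ) : ℝ :=
  (2 / Real.sqrt Real.pi) * ∫ t in Set.Ioi x, Real.exp (-t ^ 2)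

lemma integrable_gauss : Integrable (fun t : ℝ => Real.exp (-t ^ 2)) := by
  simpa using integrable_exp_neg_mul_sq one_pos

lemma integral_mul_gauss_Ioi (x : ℝ) :
    ∫ t in Ioi x, t * Real.exp (-t ^ 2) = Real.exp (-x ^ 2) / 2 := by
  have h : ∫ t in Ioi x, t * Real.exp (-t ^ 2) = 0 - (-Real.exp (-x ^ 2) / 2) := by
    apply integral_Ioi_of_hasDerivAt_of_tendsto' (f := fun t => -Real.exp (-t ^ 2) / 2)
    · intro t _
      have h1 : HasDerivAt (fun t : ℝ => -t ^ 2) (-(2 * t)) t := by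
        simpa using ((hasDerivAt_pow 2 t).fun_neg)
      have := ((h1.exp).fun_neg.div_const 2)
      refine this.congr_deriv ?_
      ring
    · have : Integrable (fun t : ℝ => t * Real.exp (-t ^ 2)) := by
        simpa using integrable_mul_exp_neg_mul_sq one_pos
      exact this.integrableOn
    · have h2 : Tendsto (fun t : ℝ => -t ^ 2) atTop atBot :=
        tendsto_neg_atBot_iff.mpr (tendsto_pow_atTop two_ne_zero)
      have h3 : Tendsto (fun t : ℝ => Real.exp (-t ^ 2)) atTop (nhds 0) :=
        Real.tendsto_exp_atBot.comp h2
      simpa using (h3.neg.div_const 2)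
  linarith [h]

lemma gauss_tail_le {x : ℝ} (hx : 0 < x) :
    ∫ t in Ioi x, Real.exp (-t ^ 2) ≤ Real.exp (-x ^ 2) / (2 * x) := by
  have h1 : ∫ t in Ioi x, Real.exp (-t ^ 2) ≤ ∫ t in Ioi x, (t / x) * Real.exp (-t ^ 2) := by
    apply setIntegral_mono_on integrable_gauss.integrableOn
    · have : Integrable (fun t : ℝ => t * Real.exp (-t ^ 2)) := by
        simpa using integrable_mul_exp_neg_mul_sq one_pos
      exact (this.div_const x).integrableOn.congr_fun (by intro t _; ring) measurableSet_Ioi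
    · exact measurableSet_Ioi
    · intro t ht
      have h2 : (1 : ℝ) ≤ t / x := (le_div_iff₀ hx).mpr (by simpa using (le_of_lt ht))
      nlinarith [Real.exp_pos (-t ^ 2)]
  have h3 : ∫ t in Ioi x, (t / x) * Real.exp (-t ^ 2)
      = (∫ t in Ioi x, t * Real.exp (-t ^ 2)) / x := by
    rw [← integral_div]
    exact setIntegral_congr_fun measurableSet_Ioi (by intro t _; ring)
  rw [h3, integral_mul_gauss_Ioi] at h1
  calc ∫ t in Ioi x, Real.exp (-t ^ 2) ≤ Real.exp (-x ^ 2) / 2 / x := h1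
    _ = Real.exp (-x ^ 2) / (2 * x) := by ring

lemma erfc_eq (x : ℝ) :
    erfc x = erfc 0 - (2 / Real.sqrt Real.pi) * ∫ t in (0:ℝ)..x, Real.exp (-t ^ 2) := by
  have key : ∀ y : ℝ, ∫ t in Ioi y, Real.exp (-t ^ 2)
      = (∫ t : ℝ, Real.exp (-t ^ 2)) - ∫ t in Iic y, Real.exp (-t ^ 2) := by
    intro y
    have := intervalIntegral.integral_Iic_add_Ioi (μ := volume) (b := y)
      integrable_gauss.integrableOn integrable_gauss.integrableOn
    linarith
  have h2 : (∫ t in Iic x, Real.exp (-t ^ 2)) - ∫ t in Iic (0:ℝ), Real.exp (-t ^ 2)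
      = ∫ t in (0:ℝ)..x, Real.exp (-t ^ 2) :=
    intervalIntegral.integral_Iic_sub_Iic integrable_gauss.integrableOn integrable_gauss.integrableOn
  unfold erfc
  rw [key x, key 0]
  rw [← h2]
  ring

lemma hasDerivAt_erfc (x : ℝ) :
    HasDerivAt erfc (-((2 / Real.sqrt Real.pi) * Real.exp (-x ^ 2))) x := by
  have heq : erfc = fun y => erfc 0 - (2 / Real.sqrt Real.pi) * ∫ t in (0:ℝ)..y, Real.exp (-t ^ 2) :=
    funext erfc_eq
  rw [heq]
  have hd : HasDerivAt (fun y : ℝ => ∫ t in (0:ℝ)..y, Real.exp (-t ^ 2)) (Real.exp (-x ^ 2)) x := by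
    apply intervalIntegral.integral_hasDerivAt_right
    · exact integrable_gauss.intervalIntegrable
    · exact integrable_gauss.aestronglyMeasurable.stronglyMeasurableAtFilter
    · exact (Real.continuous_exp.comp (by continuity)).continuousAt
  simpa using ((hd.const_mul (2 / Real.sqrt Real.pi)).const_sub (erfc 0))

lemma erfc_zero : erfc 0 = 1 := by
  unfold erfc
  have h : ∫ t in Ioi (0:ℝ), Real.exp (-t ^ 2) = Real.sqrt Real.pi / 2 := by
    have := integral_gaussian_Ioi 1
    simpa using this
  rw [h]
  have : Real.sqrt Real.pi ≠ 0 := by positivity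
  field_simp

lemma erfc_nonneg (x : ℝ) : 0 ≤ erfc x := by
  unfold erfc
  apply mul_nonneg (by positivity)
  exact setIntegral_nonneg measurableSet_Ioi (fun t _ => (Real.exp_pos _).le)

lemma erfc_le {x : ℝ} (hx : 0 < x) :
    erfc x ≤ Real.exp (-x ^ 2) / (Real.sqrt Real.pi * x) := by
  unfold erfc
  have h := gauss_tail_le hx
  have hp : (0:ℝ) < Real.sqrt Real.pi := Real.sqrt_pos.mpr Real.pi_pos
  calc (2 / Real.sqrt Real.pi) * ∫ t in Ioi x, Real.exp (-t ^ 2)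
      ≤ (2 / Real.sqrt Real.pi) * (Real.exp (-x ^ 2) / (2 * x)) := by
        apply mul_le_mul_of_nonneg_left h (by positivity)
    _ = Real.exp (-x ^ 2) / (Real.sqrt Real.pi * x) := by
        field_simp

lemma continuous_erfc : Continuous erfc :=
  continuous_iff_continuousAt.mpr fun x => (hasDerivAt_erfc x).differentiableAt.continuousAt

lemma pointwise_bound (c : ℝ) (hc : 0 < c) (k : ℕ) {y : ℝ} (hy : 1 ≤ y) :
    y ^ k * erfc (c * y) * Real.exp (y ^ 2)
      ≤ (1 / (Real.sqrt Real.pi * c)) * (y ^ k * Real.exp (-(c ^ 2 - 1) * y ^ 2)) := by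
  have hy0 : (0:ℝ) < y := lt_of_lt_of_le one_pos hy
  have hcy : 0 < c * y := mul_pos hc hy0
  have hp : (0:ℝ) < Real.sqrt Real.pi := Real.sqrt_pos.mpr Real.pi_pos
  have h1 : erfc (c * y) ≤ Real.exp (-(c * y) ^ 2) / (Real.sqrt Real.pi * (c * y)) :=
    erfc_le hcy
  calc y ^ k * erfc (c * y) * Real.exp (y ^ 2)
      ≤ y ^ k * (Real.exp (-(c * y) ^ 2) / (Real.sqrt Real.pi * (c * y))) * Real.exp (y ^ 2) := by
        apply mul_le_mul_of_nonneg_right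
          (mul_le_mul_of_nonneg_left h1 (by positivity)) (Real.exp_pos _).le
    _ = (1 / (Real.sqrt Real.pi * c)) * (y ^ k * Real.exp (-(c ^ 2 - 1) * y ^ 2)) * (1 / y) := by
        rw [show -(c ^ 2 - 1) * y ^ 2 = -(c * y) ^ 2 + y ^ 2 by ring, Real.exp_add]
        field_simp
    _ ≤ (1 / (Real.sqrt Real.pi * c)) * (y ^ k * Real.exp (-(c ^ 2 - 1) * y ^ 2)) * 1 := by
        apply mul_le_mul_of_nonneg_left _ (by positivity)
        rw [div_le_one hy0]; exact hy
    _ = (1 / (Real.sqrt Real.pi * c)) * (y ^ k * Real.exp (-(c ^ 2 - 1) * y ^ 2)) := mul_one _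

lemma f_nonneg (c : ℝ) (k : ℕ) {y : ℝ} (hy : 0 ≤ y) :
    0 ≤ y ^ k * erfc (c * y) * Real.exp (y ^ 2) := by
  have := erfc_nonneg (c * y)
  positivity

lemma integrableOn_f (c : ℝ) (hc0 : 0 < c) (hc1 : 1 < c ^ 2) (k : ℕ) :
    IntegrableOn (fun y => y ^ k * erfc (c * y) * Real.exp (y ^ 2)) (Ioi 0) := by
  have hcont : Continuous (fun y : ℝ => y ^ k * erfc (c * y) * Real.exp (y ^ 2)) :=
    ((continuous_pow k).mul (continuous_erfc.comp (continuous_const.mul continuous_id))).mul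
      (Real.continuous_exp.comp (continuous_pow 2))
  rw [show Ioi (0:ℝ) = Ioc 0 1 ∪ Ioi 1 from (Ioc_union_Ioi_eq_Ioi (by norm_num)).symm]
  apply IntegrableOn.union
  · exact hcont.integrableOn_Ioc
  · have hb : (0:ℝ) < c ^ 2 - 1 := by linarith
    have hg : IntegrableOn
        (fun y : ℝ => (1 / (Real.sqrt Real.pi * c)) * (y ^ k * Real.exp (-(c ^ 2 - 1) * y ^ 2)))
        (Ioi 1) := by
      have h0 : IntegrableOn
          (fun y : ℝ => (1 / (Real.sqrt Real.pi * c)) * (y ^ (k:ℝ) * Real.exp (-(c ^ 2 - 1) * y ^ 2)))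
          (Ioi 0) :=
        (integrableOn_rpow_mul_exp_neg_mul_sq hb
          (s := (k:ℝ)) (lt_of_lt_of_le neg_one_lt_zero (Nat.cast_nonneg k))).const_mul
          (1 / (Real.sqrt Real.pi * c))
      apply (h0.mono_set (Ioi_subset_Ioi zero_le_one)).congr_fun _ measurableSet_Ioi
      intro y _
      simp [Real.rpow_natCast]
    apply hg.integrable.mono' hcont.aestronglyMeasurable.restrict
    rw [ae_restrict_iff' measurableSet_Ioi]
    filter_upwards with y
    intro hy
    have hy1 : (1:ℝ) ≤ y := le_of_lt hy
    rw [Real.norm_eq_abs, abs_of_nonneg (f_nonneg c k (by linarith))]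
    exact pointwise_bound c hc0 k hy1

lemma tendsto_f (c : ℝ) (hc0 : 0 < c) (hc1 : 1 < c ^ 2) (k : ℕ) :
    Filter.Tendsto (fun y => y ^ k * erfc (c * y) * Real.exp (y ^ 2)) atTop (nhds 0) := by
  have hb : (0:ℝ) < c ^ 2 - 1 := by linarith
  have hg : Filter.Tendsto
      (fun y : ℝ => (1 / (Real.sqrt Real.pi * c)) * (y ^ k * Real.exp (-(c ^ 2 - 1) * y ^ 2)))
      atTop (nhds 0) := by
    have h1 : Filter.Tendsto (fun y : ℝ => y ^ (k:ℝ) * Real.exp (-(c ^ 2 - 1) * y ^ 2))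
        atTop (nhds 0) := by
      have h2 := rpow_mul_exp_neg_mul_sq_isLittleO_exp_neg hb (k:ℝ)
      have h4 : Filter.Tendsto (fun y : ℝ => -(1/2) * y) atTop atBot :=
        tendsto_id.const_mul_atTop_of_neg (by norm_num)
      have h3 : Filter.Tendsto (fun y : ℝ => Real.exp (-(1/2) * y)) atTop (nhds 0) :=
        Real.tendsto_exp_atBot.comp h4
      exact h2.isBigO.trans_tendsto h3
    simp_rw [Real.rpow_natCast] at h1
    simpa using h1.const_mul (1 / (Real.sqrt Real.pi * c))
  apply squeeze_zero' _ _ hg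
  · filter_upwards [Filter.eventually_ge_atTop (1:ℝ)] with y hy
    exact f_nonneg c k (by linarith)
  · filter_upwards [Filter.eventually_ge_atTop (1:ℝ)] with y hy
    exact pointwise_bound c hc0 k hy

lemma moment (b : ℝ) (hb : 0 < b) (n : ℕ) :
    ∫ y in Ioi (0:ℝ), y ^ n * Real.exp (-b * y ^ 2)
      = b ^ (-((n:ℝ) + 1) / 2) * (1 / 2) * Real.Gamma (((n:ℝ) + 1) / 2) := by
  rw [← integral_rpow_mul_exp_neg_mul_rpow two_pos
    (q := (n:ℝ)) (by exact_mod_cast neg_one_lt_zero.trans_le (Nat.cast_nonneg n)) hb]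
  refine setIntegral_congr_fun measurableSet_Ioi fun y _ => ?_
  rw [Real.rpow_natCast, show ((2:ℝ)) = ((2:ℕ):ℝ) by norm_num, Real.rpow_natCast]

lemma integrableOn_pow_gauss {b : ℝ} (hb : 0 < b) (n : ℕ) :
    IntegrableOn (fun y : ℝ => y ^ n * Real.exp (-b * y ^ 2)) (Ioi 0) := by
  apply (integrableOn_rpow_mul_exp_neg_mul_sq hb
    (s := (n:ℝ)) (lt_of_lt_of_le neg_one_lt_zero (Nat.cast_nonneg n))).congr_fun _
    measurableSet_Ioi
  intro y _
  simp [Real.rpow_natCast]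

/-- `I_j = ∫_0^∞ y^j erfc(√(2/(1-τ)) y) e^{y²} dy`. -/
noncomputable def Ij (τ : ℝ) (j : ℕ) : ℝ :=
  ∫ y in Set.Ioi (0 : ℝ), y ^ j * erfc (Real.sqrt (2 / (1 - τ)) * y) * Real.exp (y ^ 2)

/-- the recursion for `I_j`, `j` odd. -/
theorem Ij_recursion (τ : ℝ) (hτ0 : 0 ≤ τ) (hτ1 : τ < 1) (j : ℕ) (hj : Odd j) :
    Ij τ j = -(((j : ℝ) - 1) / 2) * Ij τ (j - 2) +
      (1 / (2 * Real.sqrt Real.pi)) * Real.sqrt (2 / (1 - τ)) *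
        ((1 - τ) / (1 + τ)) ^ ((j : ℝ) / 2) * Real.Gamma ((j : ℝ) / 2) -
      (if j = 1 then (1 : ℝ) / 2 else 0) := by
  have hτd : (0:ℝ) < 1 - τ := by linarith
  set c : ℝ := Real.sqrt (2 / (1 - τ)) with hc_def
  have hc0 : 0 < c := Real.sqrt_pos.mpr (by positivity)
  have hc2 : c ^ 2 = 2 / (1 - τ) := Real.sq_sqrt (by positivity)
  have hc1 : 1 < c ^ 2 := by
    rw [hc2, lt_div_iff₀ hτd]; linarith
  have hb : (0:ℝ) < c ^ 2 - 1 := by linarith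
  have ha : c ^ 2 - 1 = (1 + τ) / (1 - τ) := by
    rw [hc2]; field_simp; ring
  have hj1 : 1 ≤ j := hj.pos
  have hjcast : ((j - 1 : ℕ) : ℝ) = (j:ℝ) - 1 := by
    push_cast [Nat.cast_sub hj1]; ring
  have hp : (0:ℝ) < Real.sqrt Real.pi := Real.sqrt_pos.mpr Real.pi_pos
  -- the function F for integration by parts
  set F : ℝ → ℝ := fun y => 1/2 * (y ^ (j-1) * erfc (c * y) * Real.exp (y ^ 2)) with hF
  set G : ℝ → ℝ := fun y =>
      y ^ j * erfc (c * y) * Real.exp (y ^ 2)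
      + ((j:ℝ) - 1)/2 * (y ^ (j-2) * erfc (c * y) * Real.exp (y ^ 2))
      - (c / Real.sqrt Real.pi) * (y ^ (j-1) * Real.exp (-(c ^ 2 - 1) * y ^ 2)) with hG
  have hderiv : ∀ y : ℝ, HasDerivAt F (G y) y := by
    intro y
    have hu : HasDerivAt (fun y : ℝ => y ^ (j-1)) (((j-1:ℕ):ℝ) * y ^ (j-2)) y := by
      have := hasDerivAt_pow (j-1) y
      rwa [Nat.sub_sub, show (1+1 = 2) from rfl] at this
    have hv : HasDerivAt (fun y : ℝ => erfc (c * y))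
        (-((2 / Real.sqrt Real.pi) * Real.exp (-(c*y) ^ 2)) * c) y := by
      have hcy : HasDerivAt (fun y : ℝ => c * y) c y := by
        simpa using (hasDerivAt_id y).const_mul c
      exact (hasDerivAt_erfc (c*y)).comp y hcy
    have hw : HasDerivAt (fun y : ℝ => Real.exp (y ^ 2)) (Real.exp (y ^ 2) * (2 * y)) y := by
      have := (hasDerivAt_pow 2 y).exp
      simpa using this
    have hd := ((hu.fun_mul hv).fun_mul hw).const_mul (1/2 : ℝ)
    refine hd.congr_deriv ?_
    have hyj : y ^ (j-1) * y = y ^ j := by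
      rw [← pow_succ, Nat.sub_add_cancel hj1]
    have hexp : Real.exp (-(c ^ 2 - 1) * y ^ 2) = Real.exp (-(c*y) ^ 2) * Real.exp (y ^ 2) := by
      rw [← Real.exp_add]; ring_nf
    rw [hG]
    simp only [hjcast]
    rw [hexp]
    rw [← hyj]
    ring
  have hint1 : IntegrableOn (fun y : ℝ => y ^ j * erfc (c*y) * Real.exp (y^2)) (Ioi 0) :=
    integrableOn_f c hc0 hc1 j
  have hint2 : IntegrableOn (fun y : ℝ => y ^ (j-2) * erfc (c*y) * Real.exp (y^2)) (Ioi 0) :=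
    integrableOn_f c hc0 hc1 (j-2)
  have hint3 : IntegrableOn (fun y : ℝ => y ^ (j-1) * Real.exp (-(c^2-1)*y^2)) (Ioi 0) :=
    integrableOn_pow_gauss hb (j-1)
  have hintG : IntegrableOn G (Ioi 0) := by
    rw [hG]
    exact (hint1.add (hint2.const_mul _)).sub (hint3.const_mul _)
  have htend : Filter.Tendsto F atTop (nhds 0) := by
    have := (tendsto_f c hc0 hc1 (j-1)).const_mul (1/2:ℝ)
    rw [hF]
    simpa [mul_comm] using this
  have hFTC : ∫ y in Ioi (0:ℝ), G y = 0 - F 0 :=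
    integral_Ioi_of_hasDerivAt_of_tendsto' (fun y _ => hderiv y) hintG htend
  have hF0 : F 0 = if j = 1 then (1:ℝ)/2 else 0 := by
    rw [hF]
    rcases eq_or_ne j 1 with h|h
    · subst h; simp [erfc_zero]
    · have hne : j - 1 ≠ 0 := by omega
      simp [zero_pow hne, h]
  have hsplit : ∫ y in Ioi (0:ℝ), G y
      = Ij τ j + ((j:ℝ)-1)/2 * Ij τ (j-2)
        - (c/Real.sqrt Real.pi) * ∫ y in Ioi (0:ℝ), y^(j-1) * Real.exp (-(c^2-1)*y^2) := by
    simp only [hG]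
    rw [integral_sub
        (f := fun y : ℝ => y ^ j * erfc (c * y) * Real.exp (y ^ 2)
          + ((j:ℝ) - 1) / 2 * (y ^ (j - 2) * erfc (c * y) * Real.exp (y ^ 2)))
        (g := fun y : ℝ => c / Real.sqrt Real.pi * (y ^ (j - 1) * Real.exp (-(c ^ 2 - 1) * y ^ 2)))
        (hint1.add (hint2.const_mul _)) (hint3.const_mul _),
      integral_add
        (f := fun y : ℝ => y ^ j * erfc (c * y) * Real.exp (y ^ 2))
        (g := fun y : ℝ => ((j:ℝ) - 1) / 2 * (y ^ (j - 2) * erfc (c * y) * Real.exp (y ^ 2)))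
        hint1 (hint2.const_mul _), integral_const_mul, integral_const_mul]
    unfold Ij
    rw [← hc_def]
  have hM : ∫ y in Ioi (0:ℝ), y^(j-1) * Real.exp (-(c^2-1)*y^2)
      = ((1-τ)/(1+τ)) ^ ((j:ℝ)/2) * (1/2) * Real.Gamma ((j:ℝ)/2) := by
    rw [moment _ hb (j-1), hjcast]
    have h1τ : (0:ℝ) < 1 + τ := by linarith
    have hx : (0:ℝ) < (1+τ)/(1-τ) := by positivity
    have hpow : (c^2-1) ^ (-(((j:ℝ)-1)+1)/2) = ((1-τ)/(1+τ)) ^ ((j:ℝ)/2) := by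
      rw [ha, show (-(((j:ℝ)-1)+1)/2) = -((j:ℝ)/2) by ring,
        Real.rpow_neg hx.le, ← Real.inv_rpow hx.le, inv_div]
    rw [hpow, show ((((j:ℝ)-1)+1)/2) = (j:ℝ)/2 by ring]
  rw [hsplit, hF0, hM] at hFTC
  rw [hc_def] at hFTC ⊢
  have : (1 / (2 * Real.sqrt Real.pi)) * Real.sqrt (2 / (1 - τ)) *
        ((1 - τ) / (1 + τ)) ^ ((j : ℝ) / 2) * Real.Gamma ((j : ℝ) / 2)
      = (Real.sqrt (2 / (1 - τ)) / Real.sqrt Real.pi) *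
        (((1-τ)/(1+τ)) ^ ((j:ℝ)/2) * (1/2) * Real.Gamma ((j:ℝ)/2)) := by
    field_simp
  rw [this]
  linarith [hFTC]
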